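/- arXiv:math/0412163 — 3 statements merged into one kernel-verified Lean document; each statement's English description precedes it below -/
import Mathlib

section
/- Let N ≥ 1 and 0 < ρ < ρ′. Then C_{ρ,N} ⊆ C_{ρ′,N}: every N-tuple A = (A₁,…,A_N) of bounded linear operators on a complex Hilbert space X admitting a unitary ρ-dilation also admits a unitary ρ′-dilation. -/
open ContinuousLinearMap

noncomputable section

/-- A continuous linear operator on a complex Hilbert space is unitary. -/
def IsUnitaryOp {Y : Type*} [NormedAddCommGroup Y] [InnerProductSpace ℂ Y] [CompleteSpace Y]
    (T : Y →L[ℂ] Y) : Prop :=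
  T ∘L adjoint T = 1 ∧ adjoint T ∘L T = 1

/-- A unitary `ρ`-dilation of an `N`-tuple of bounded operators on a complex Hilbert space `X`:
a complex Hilbert space `Y`, a linear isometry `ι : X → Y`, and an `N`-tuple `At` of operators
on `Y` such that every unimodular combination `ζ₁At₁ + ⋯ + ζ_N At_N` is unitary, and
`(z₁A₁ + ⋯ + z_N A_N)ⁿ = ρ · ι* ∘ (z₁At₁ + ⋯ + z_N At_N)ⁿ ∘ ι` for all `z ∈ ℂ^N` and `n ≥ 1`. -/
structure UnitaryRhoDilation (N : ℕ) (ρ : ℝ) (X : Type*) [NormedAddCommGroup X]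
    [InnerProductSpace ℂ X] [CompleteSpace X] (A : Fin N → X →L[ℂ] X) where
  Y : Type
  [instN : NormedAddCommGroup Y]
  [instI : InnerProductSpace ℂ Y]
  [instC : CompleteSpace Y]
  ι : X →L[ℂ] Y
  isom : Isometry ι
  At : Fin N → Y →L[ℂ] Y
  unit : ∀ ζ : Fin N → ℂ, (∀ k, ‖ζ k‖ = 1) → IsUnitaryOp (∑ k, ζ k • At k)
  dil : ∀ (z : Fin N → ℂ) (n : ℕ), 1 ≤ n →
    (∑ k, z k • A k) ^ n = (ρ : ℂ) • (adjoint ι ∘L (((∑ k, z k • At k) ^ n) ∘L ι))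

/-- The class `C_{ρ,N}`: `N`-tuples of bounded operators admitting a unitary `ρ`-dilation. -/
def MemC (N : ℕ) (ρ : ℝ) {X : Type*} [NormedAddCommGroup X] [InnerProductSpace ℂ X]
    [CompleteSpace X] (A : Fin N → X →L[ℂ] X) : Prop :=
  Nonempty (UnitaryRhoDilation N ρ X A)

section ShiftSpace

variable {Y : Type*} [NormedAddCommGroup Y] [InnerProductSpace ℂ Y] [CompleteSpace Y]

lemma memℓp_shift (f : lp (fun _ : ℤ => Y) 2) : Memℓp (fun m : ℤ => f (m - 1)) 2 := by
  have h : Summable fun i : ℤ => ‖f i‖ ^ (2:ENNReal).toReal :=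
    (memℓp_gen_iff (by norm_num)).1 (lp.memℓp f)
  exact memℓp_gen (p := 2)
    (((Equiv.subRight (1:ℤ)).summable_iff (f := fun i : ℤ => ‖f i‖ ^ (2:ENNReal).toReal)).2 h)

lemma memℓp_unshift (f : lp (fun _ : ℤ => Y) 2) : Memℓp (fun m : ℤ => f (m + 1)) 2 := by
  have h : Summable fun i : ℤ => ‖f i‖ ^ (2:ENNReal).toReal :=
    (memℓp_gen_iff (by norm_num)).1 (lp.memℓp f)
  exact memℓp_gen (p := 2)
    (((Equiv.addRight (1:ℤ)).summable_iff (f := fun i : ℤ => ‖f i‖ ^ (2:ENNReal).toReal)).2 h)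

/-- The bilateral shift on `ℓ²(ℤ, Y)`. -/
def shiftL : lp (fun _ : ℤ => Y) 2 ≃ₗᵢ[ℂ] lp (fun _ : ℤ => Y) 2 where
  toFun f := ⟨fun m => f (m - 1), memℓp_shift f⟩
  invFun f := ⟨fun m => f (m + 1), memℓp_unshift f⟩
  map_add' f g := by
    apply lp.ext
    funext m
    simp [lp.coeFn_add]
    rfl
  map_smul' c f := by
    apply lp.ext
    funext m
    simp [lp.coeFn_smul]
  left_inv f := by
    apply lp.ext
    funext m
    simp
  right_inv f := by
    apply lp.ext
    funext m
    simp
  norm_map' f := by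
    rw [lp.norm_eq_tsum_rpow (by norm_num), lp.norm_eq_tsum_rpow (by norm_num)]
    congr 1
    exact (Equiv.subRight (1:ℤ)).tsum_eq (fun i : ℤ => ‖f i‖ ^ (2:ENNReal).toReal)

@[simp] lemma shiftL_apply (f : lp (fun _ : ℤ => Y) 2) (m : ℤ) :
    (shiftL f : ∀ _ : ℤ, Y) m = f (m - 1) := rfl

@[simp] lemma shiftL_symm_apply (f : lp (fun _ : ℤ => Y) 2) (m : ℤ) :
    (shiftL.symm f : ∀ _ : ℤ, Y) m = f (m + 1) := rfl

end ShiftSpace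

section ShiftFacts

set_option linter.unusedSectionVars false

variable {Y : Type*} [NormedAddCommGroup Y] [InnerProductSpace ℂ Y] [CompleteSpace Y]

/-- The shift as a continuous linear map. -/
def ScL : lp (fun _ : ℤ => Y) 2 →L[ℂ] lp (fun _ : ℤ => Y) 2 :=
  (shiftL (Y := Y)).toLinearIsometry.toContinuousLinearMap

def ScL' : lp (fun _ : ℤ => Y) 2 →L[ℂ] lp (fun _ : ℤ => Y) 2 :=
  (shiftL (Y := Y)).symm.toLinearIsometry.toContinuousLinearMap

@[simp] lemma ScL_apply (f : lp (fun _ : ℤ => Y) 2) : ScL f = shiftL f := rfl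
@[simp] lemma ScL'_apply (f : lp (fun _ : ℤ => Y) 2) : ScL' f = shiftL.symm f := rfl

lemma adjoint_ScL : adjoint (ScL (Y := Y)) = ScL' := by
  refine ((ContinuousLinearMap.eq_adjoint_iff _ _).2 fun x y => ?_).symm
  rw [ScL'_apply, ScL_apply, ← (shiftL (Y := Y)).inner_map_map (shiftL.symm x) y,
    LinearIsometryEquiv.apply_symm_apply]

lemma ScL_comp_ScL' : (ScL (Y := Y)) ∘L ScL' = 1 := by
  ext f
  simp

lemma ScL'_comp_ScL : (ScL' (Y := Y)) ∘L ScL = 1 := by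
  ext f
  simp

lemma lp_single_add (m : ℤ) (x y : Y) :
    lp.single (E := fun _ : ℤ => Y) 2 m (x + y) =
      lp.single (E := fun _ : ℤ => Y) 2 m x + lp.single (E := fun _ : ℤ => Y) 2 m y := by
  apply lp.ext
  funext i
  by_cases h : i = m
  · subst h
    simp [lp.single_apply_self, lp.coeFn_add]
  · simp [lp.single_apply_ne _ _ _ h, lp.coeFn_add]

/-- Embedding at coordinate `0` as a linear isometry. -/
def singleLi : Y →ₗᵢ[ℂ] lp (fun _ : ℤ => Y) 2 where
  toLinearMap :=
    { toFun := fun y => lp.single 2 (0:ℤ) y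
      map_add' := fun x y => lp_single_add 0 x y
      map_smul' := fun c x => by simpa using lp.single_smul 2 (0:ℤ) c x }
  norm_map' := fun y => lp.norm_single (E := fun _ : ℤ => Y) (p := 2) (by norm_num) (0:ℤ) y

/-- Embedding at coordinate `0` as a continuous linear map. -/
def singleCLM : Y →L[ℂ] lp (fun _ : ℤ => Y) 2 := (singleLi (Y := Y)).toContinuousLinearMap

@[simp] lemma singleCLM_apply (y : Y) : singleCLM y = lp.single 2 (0:ℤ) y := by
  simp [singleCLM, singleLi, LinearIsometry.coe_toContinuousLinearMap]

lemma ScL_single (m : ℤ) (y : Y) :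
    ScL (lp.single 2 m y) = lp.single 2 (m + 1) y := by
  apply lp.ext
  funext i
  rw [ScL_apply]
  show (lp.single 2 m y : ∀ _ : ℤ, Y) (i - 1) = _
  by_cases h : i = m + 1
  · subst h
    rw [add_sub_cancel_right, lp.single_apply_self, lp.single_apply_self]
  · rw [lp.single_apply_ne _ _ _ (show i - 1 ≠ m by omega),
      lp.single_apply_ne _ _ _ h]

lemma ScL_pow_single (n : ℕ) (y : Y) :
    (ScL ^ n) (lp.single 2 (0:ℤ) y) = lp.single 2 (n : ℤ) y := by
  induction n with
  | zero => simp
  | succ n ih =>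
      rw [pow_succ', ContinuousLinearMap.mul_apply, ih, ScL_single]
      norm_num

lemma inner_single_pow_zero {n : ℕ} (hn : 1 ≤ n) (y y' : Y) :
    (inner ℂ ((ScL ^ n) (lp.single 2 (0:ℤ) y)) (lp.single 2 (0:ℤ) y') : ℂ) = 0 := by
  rw [ScL_pow_single, lp.inner_single_left]
  rw [lp.single_apply_ne _ _ _ (show (n:ℤ) ≠ 0 by omega)]
  simp

end ShiftFacts

section ProdOps

set_option linter.unusedSectionVars false

variable {Y : Type*} [NormedAddCommGroup Y] [InnerProductSpace ℂ Y] [CompleteSpace Y]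

local notation "KY" => lp (fun _ : ℤ => Y) 2
local notation "PY" => WithLp 2 (Y × lp (fun _ : ℤ => Y) 2)

/-- The equivalence between the L2 product and the plain product. -/
def eP (Y : Type*) [NormedAddCommGroup Y] [InnerProductSpace ℂ Y] [CompleteSpace Y] : WithLp 2 (Y × lp (fun _ : ℤ => Y) 2) ≃L[ℂ] Y × lp (fun _ : ℤ => Y) 2 := WithLp.prodContinuousLinearEquiv 2 ℂ Y (lp (fun _ : ℤ => Y) 2)

/-- Block diagonal operator on the L2 product. -/
def dOp (T1 : Y →L[ℂ] Y) (T2 : KY →L[ℂ] KY) : PY →L[ℂ] PY :=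
  ((eP (Y := Y)).symm.toContinuousLinearMap) ∘L
    ((T1.prodMap T2) ∘L (eP (Y := Y)).toContinuousLinearMap)

lemma dOp_fst (T1 : Y →L[ℂ] Y) (T2 : KY →L[ℂ] KY) (x : PY) :
    (dOp T1 T2 x).fst = T1 x.fst := rfl

lemma dOp_snd (T1 : Y →L[ℂ] Y) (T2 : KY →L[ℂ] KY) (x : PY) :
    (dOp T1 T2 x).snd = T2 x.snd := rfl

lemma dOp_comp (T1 S1 : Y →L[ℂ] Y) (T2 S2 : KY →L[ℂ] KY) :
    dOp T1 T2 ∘L dOp S1 S2 = dOp (T1 ∘L S1) (T2 ∘L S2) := by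
  ext x : 1
  rfl

lemma dOp_one : dOp (1 : Y →L[ℂ] Y) (1 : KY →L[ℂ] KY) = 1 := by
  ext x : 1
  rfl

lemma dOp_zero : dOp (0 : Y →L[ℂ] Y) (0 : KY →L[ℂ] KY) = 0 := by
  ext x : 1
  rfl

lemma dOp_add (T1 S1 : Y →L[ℂ] Y) (T2 S2 : KY →L[ℂ] KY) :
    dOp T1 T2 + dOp S1 S2 = dOp (T1 + S1) (T2 + S2) := by
  ext x : 1
  rfl

lemma dOp_smul (c : ℂ) (T1 : Y →L[ℂ] Y) (T2 : KY →L[ℂ] KY) :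
    c • dOp T1 T2 = dOp (c • T1) (c • T2) := by
  ext x : 1
  rfl

lemma dOp_pow (T1 : Y →L[ℂ] Y) (T2 : KY →L[ℂ] KY) (n : ℕ) :
    (dOp T1 T2) ^ n = dOp (T1 ^ n) (T2 ^ n) := by
  induction n with
  | zero => simpa using dOp_one.symm
  | succ n ih =>
      rw [pow_succ, pow_succ, pow_succ, ih, ContinuousLinearMap.mul_def,
        ContinuousLinearMap.mul_def, ContinuousLinearMap.mul_def, dOp_comp]

lemma dOp_sum {ι : Type*} (s : Finset ι) (T : ι → (Y →L[ℂ] Y)) (S : ι → (KY →L[ℂ] KY)) :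
    ∑ k ∈ s, dOp (T k) (S k) = dOp (∑ k ∈ s, T k) (∑ k ∈ s, S k) := by
  induction s using Finset.cons_induction with
  | empty => simpa using dOp_zero.symm
  | cons a s ha ih => rw [Finset.sum_cons, Finset.sum_cons, Finset.sum_cons, ih, dOp_add]

lemma dOp_adjoint (T1 : Y →L[ℂ] Y) (T2 : KY →L[ℂ] KY) :
    adjoint (dOp T1 T2) = dOp (adjoint T1) (adjoint T2) := by
  refine ((ContinuousLinearMap.eq_adjoint_iff _ _).2 fun x y => ?_).symm
  rw [WithLp.prod_inner_apply, WithLp.prod_inner_apply]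
  simp only [WithLp.ofLp_fst, WithLp.ofLp_snd]
  rw [dOp_fst, dOp_snd, dOp_fst, dOp_snd,
    ContinuousLinearMap.adjoint_inner_left, ContinuousLinearMap.adjoint_inner_left]

lemma adjoint_smul' (c : ℂ) (T : KY →L[ℂ] KY) :
    adjoint (c • T) = (starRingEnd ℂ) c • adjoint T := by
  rw [← ContinuousLinearMap.star_eq_adjoint, ← ContinuousLinearMap.star_eq_adjoint, star_smul]
  rfl

end ProdOps



set_option maxHeartbeats 1600000 in
/-- for `0 < ρ < ρ'`, the class `C_{ρ,N}` is contained in `C_{ρ',N}`: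
every `N`-tuple admitting a unitary `ρ`-dilation admits a unitary `ρ'`-dilation. -/
theorem memC_mono (N : ℕ) (hN : 1 ≤ N) (ρ ρ' : ℝ) (hρ : 0 < ρ) (hρρ' : ρ < ρ')
    {X : Type*} [NormedAddCommGroup X] [InnerProductSpace ℂ X] [CompleteSpace X]
    (A : Fin N → X →L[ℂ] X) (hA : MemC N ρ A) : MemC N ρ' A := by
  obtain ⟨D⟩ := hA
  letI := D.instN
  letI := D.instI
  letI := D.instC
  haveI : NeZero N := ⟨by omega⟩
  have hρ'0 : (0:ℝ) < ρ' := lt_trans hρ hρρ'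
  set a : ℝ := Real.sqrt (ρ / ρ') with ha
  set b : ℝ := Real.sqrt (1 - ρ / ρ') with hb
  have hr0 : 0 ≤ ρ / ρ' := by positivity
  have hr1 : ρ / ρ' ≤ 1 := by
    rw [div_le_one hρ'0]; exact le_of_lt hρρ'
  have ha2 : a * a = ρ / ρ' := Real.mul_self_sqrt hr0
  have hb2 : b * b = 1 - ρ / ρ' := Real.mul_self_sqrt (by linarith)
  let ι' : X →L[ℂ] WithLp 2 (D.Y × lp (fun _ : ℤ => D.Y) 2) :=
    (eP (Y := D.Y)).symm.toContinuousLinearMap ∘L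
      (((a:ℂ) • D.ι).prod ((b:ℂ) • (singleCLM ∘L D.ι)))
  have hfst : ∀ x, (ι' x).fst = (a:ℂ) • D.ι x := fun _ => rfl
  have hsnd : ∀ x, (ι' x).snd = (b:ℂ) • lp.single 2 (0:ℤ) (D.ι x) := fun _ => rfl
  let V : Fin N → (lp (fun _ : ℤ => D.Y) 2 →L[ℂ] lp (fun _ : ℤ => D.Y) 2) :=
    fun k => if k = (0 : Fin N) then ScL (Y := D.Y) else 0
  let B : Fin N → _ := fun k => dOp (D.At k) (V k)
  have key : ∀ w : Fin N → ℂ,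
      ∑ k, w k • B k = dOp (∑ k, w k • D.At k) (w 0 • ScL (Y := D.Y)) := by
    intro w
    have h1 : ∀ k : Fin N, w k • B k = dOp (w k • D.At k) (w k • V k) :=
      fun k => dOp_smul _ _ _
    rw [Finset.sum_congr rfl (fun k _ => h1 k), dOp_sum]
    congr 1
    rw [Finset.sum_eq_single (0 : Fin N)]
    · simp [V]
    · intro k _ hk; simp [V, hk]
    · intro h; exact absurd (Finset.mem_univ _) h
  have hιn : ∀ x, ‖D.ι x‖ = ‖x‖ := fun x => D.isom.norm_map_of_map_zero (map_zero _) x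
  have hnorm : ∀ x, ‖ι' x‖ = ‖x‖ := by
    intro x
    have h1 : (inner ℂ (ι' x) (ι' x) : ℂ) = inner ℂ (D.ι x) (D.ι x) := by
      rw [WithLp.prod_inner_apply]
      simp only [WithLp.ofLp_fst, WithLp.ofLp_snd]
      rw [hfst, hsnd]
      rw [inner_smul_left, inner_smul_right, inner_smul_left, inner_smul_right]
      rw [lp.inner_single_left, lp.single_apply_self]
      rw [Complex.conj_ofReal, Complex.conj_ofReal]
      have hab : ((a:ℂ)) * a + ((b:ℂ)) * b = 1 := by
        have h : a * a + b * b = 1 := by rw [ha2, hb2]; ring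
        exact_mod_cast congrArg Complex.ofReal h
      linear_combination (inner ℂ (D.ι x) (D.ι x) : ℂ) * hab
    have h2 : ‖ι' x‖^2 = ‖x‖^2 := by
      have h3 := inner_self_eq_norm_sq (𝕜 := ℂ) (ι' x)
      have h4 := inner_self_eq_norm_sq (𝕜 := ℂ) (D.ι x)
      calc ‖ι' x‖^2 = RCLike.re (inner ℂ (ι' x) (ι' x) : ℂ) := h3.symm
        _ = RCLike.re (inner ℂ (D.ι x) (D.ι x) : ℂ) := by rw [h1]
        _ = ‖D.ι x‖^2 := h4
        _ = ‖x‖^2 := by rw [hιn x]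
    calc ‖ι' x‖ = Real.sqrt (‖ι' x‖^2) := (Real.sqrt_sq (norm_nonneg _)).symm
      _ = Real.sqrt (‖x‖^2) := by rw [h2]
      _ = ‖x‖ := Real.sqrt_sq (norm_nonneg _)
  refine ⟨{ Y := WithLp 2 (D.Y × lp (fun _ : ℤ => D.Y) 2)
            ι := ι'
            isom := AddMonoidHomClass.isometry_of_norm ι' hnorm
            At := B
            unit := ?_
            dil := ?_ }⟩
  · intro ζ hζ
    have hz1 : ζ 0 * (starRingEnd ℂ) (ζ 0) = 1 := by
      rw [Complex.mul_conj, Complex.normSq_eq_norm_sq, hζ 0]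
      norm_num
    have hz2 : (starRingEnd ℂ) (ζ 0) * ζ 0 = 1 := by rw [mul_comm]; exact hz1
    have hadj : adjoint (∑ k, ζ k • B k) =
        dOp (adjoint (∑ k, ζ k • D.At k)) ((starRingEnd ℂ) (ζ 0) • ScL' (Y := D.Y)) := by
      rw [key, dOp_adjoint, adjoint_smul', adjoint_ScL]
    constructor
    · rw [hadj, key, dOp_comp, smul_comp, comp_smul, smul_smul, hz1, one_smul,
        ScL_comp_ScL', (D.unit ζ hζ).1, dOp_one]
    · rw [hadj, key, dOp_comp, smul_comp, comp_smul, smul_smul, hz2, one_smul,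
        ScL'_comp_ScL, (D.unit ζ hζ).2, dOp_one]
  · intro z n hn
    rw [key, dOp_pow, smul_pow]
    ext x
    apply ext_inner_right ℂ
    intro v
    rw [D.dil z n hn]
    simp only [ContinuousLinearMap.smul_apply, ContinuousLinearMap.coe_comp',
      Function.comp_apply, inner_smul_left, ContinuousLinearMap.adjoint_inner_left,
      Complex.conj_ofReal]
    rw [WithLp.prod_inner_apply]
    simp only [WithLp.ofLp_fst, WithLp.ofLp_snd]
    rw [dOp_fst, dOp_snd, hfst, hsnd, hfst, hsnd]
    simp only [ContinuousLinearMap.smul_apply, map_smul, inner_smul_left, inner_smul_right,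
      Complex.conj_ofReal, smul_smul]
    rw [inner_single_pow_zero hn]
    have hra : (ρ:ℂ) = (ρ':ℂ) * ((a:ℂ) * a) := by
      have h : ρ = ρ' * (a * a) := by rw [ha2]; field_simp
      exact_mod_cast congrArg Complex.ofReal h
    linear_combination (inner ℂ ((((∑ k, z k • D.At k)) ^ n) (D.ι x)) (D.ι v) : ℂ) *
      hra
end
end

section
/- Let N ≥ 1, let ρ > 0 with ρ ≠ 1, let X be a nonzero complex Hilbert space, and let A = (A₁,…,A_N) be an N-tuple of bounded linear operators on X such that for every ζ ∈ ℂ^N with |ζ₁| = … = |ζ_N| = 1 the operator (1/ρ)·(ζ₁A₁ + … + ζ_N A_N) is unitary. Then A does not admit a unitary ρ-dilation, i.e. A ∉ C_{ρ,N}. -/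
open ContinuousLinearMap

noncomputable section

/-- An operator with `T* T = 1` preserves inner products. -/
lemma aux_inner_pres {Y : Type*} [NormedAddCommGroup Y] [InnerProductSpace ℂ Y]
    [CompleteSpace Y] (T : Y →L[ℂ] Y) (h : adjoint T ∘L T = 1) (v w : Y) :
    inner ℂ (T v) (T w) = inner ℂ v w := by
  rw [← adjoint_inner_left]
  have hv : adjoint T (T v) = v := by
    have := ContinuousLinearMap.ext_iff.mp h v
    simpa using this
  rw [hv]

/-- An operator with `T* T = 1` preserves norms. -/
lemma aux_norm_pres {Y : Type*} [NormedAddCommGroup Y] [InnerProductSpace ℂ Y]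
    [CompleteSpace Y] (T : Y →L[ℂ] Y) (h : adjoint T ∘L T = 1) (v : Y) :
    ‖T v‖ = ‖v‖ := by
  rw [norm_eq_sqrt_re_inner (𝕜 := ℂ) (T v), norm_eq_sqrt_re_inner (𝕜 := ℂ) v, aux_inner_pres T h]

/-- An operator with `T* T = 1` is injective. -/
lemma aux_inj {Y : Type*} [NormedAddCommGroup Y] [InnerProductSpace ℂ Y]
    [CompleteSpace Y] (T : Y →L[ℂ] Y) (h : adjoint T ∘L T = 1) {v : Y} (hv : T v = 0) :
    v = 0 := by
  have h0 := aux_norm_pres T h v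
  rw [hv, norm_zero] at h0
  exact norm_eq_zero.mp h0.symm

/-- if `ρ > 0`, `ρ ≠ 1`, `X ≠ 0`, and `(1/ρ)(ζ₁A₁ + ⋯ + ζ_N A_N)` is unitary for
every unimodular `ζ ∈ ℂ^N`, then `A` admits no unitary `ρ`-dilation, i.e. `A ∉ C_{ρ,N}`. -/
theorem not_memC_of_unitary_pencil (N : ℕ) (hN : 1 ≤ N) (ρ : ℝ) (hρ : 0 < ρ) (hρ1 : ρ ≠ 1)
    {X : Type*} [NormedAddCommGroup X] [InnerProductSpace ℂ X] [CompleteSpace X] [Nontrivial X]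
    (A : Fin N → X →L[ℂ] X)
    (hA : ∀ ζ : Fin N → ℂ, (∀ k, ‖ζ k‖ = 1) →
      IsUnitaryOp ((ρ : ℂ)⁻¹ • ∑ k, ζ k • A k)) :
    ¬ MemC N ρ A := by
  rintro ⟨D⟩
  letI := D.instN
  letI := D.instI
  letI := D.instC
  have hρ0 : (ρ : ℂ) ≠ 0 := by
    exact_mod_cast hρ.ne'
  set ζ : Fin N → ℂ := fun _ => 1 with hζdef
  have hζ : ∀ k, ‖ζ k‖ = 1 := fun k => norm_one
  set S : X →L[ℂ] X := ∑ k, ζ k • A k with hSdef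
  set T : D.Y →L[ℂ] D.Y := ∑ k, ζ k • D.At k with hTdef
  set U : X →L[ℂ] X := (ρ : ℂ)⁻¹ • S with hUdef
  have hU : IsUnitaryOp U := hA ζ hζ
  have hTu : IsUnitaryOp T := D.unit ζ hζ
  have hSU : S = (ρ : ℂ) • U := by
    rw [hUdef, smul_smul, mul_inv_cancel₀ hρ0, one_smul]
  -- the embedding preserves norms and inner products
  have hιn : ∀ x : X, ‖D.ι x‖ = ‖x‖ :=
    D.isom.norm_map_of_map_zero (map_zero D.ι)
  have hιinner : ∀ x y : X, inner ℂ (D.ι x) (D.ι y) = inner ℂ x y := fun x y =>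
    LinearIsometry.inner_map_map ⟨D.ι.toLinearMap, hιn⟩ x y
  have hιadj : ∀ w : X, adjoint D.ι (D.ι w) = w := by
    intro w
    refine ext_inner_right ℂ (fun v => ?_)
    rw [adjoint_inner_left, hιinner]
  -- from the dilation relation at n = 1
  have hd1 := D.dil ζ 1 le_rfl
  have hadj : ∀ x : X, adjoint D.ι (T (D.ι x)) = U x := by
    intro x
    have h := ContinuousLinearMap.ext_iff.mp hd1 x
    simp only [pow_one, ContinuousLinearMap.smul_apply, ContinuousLinearMap.comp_apply] at h
    rw [hUdef, ContinuousLinearMap.smul_apply, h, smul_smul, inv_mul_cancel₀ hρ0, one_smul]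
  -- the key intertwining identity `T ∘ ι = ι ∘ U`
  have key : ∀ x : X, T (D.ι x) = D.ι (U x) := by
    intro x
    have hUn : ‖U x‖ = ‖x‖ := aux_norm_pres U hU.2 x
    have hni : ‖T (D.ι x)‖ = ‖x‖ := by rw [aux_norm_pres T hTu.2, hιn]
    have hnu : ‖D.ι (U x)‖ = ‖x‖ := by rw [hιn, hUn]
    have hin : inner ℂ (T (D.ι x)) (D.ι (U x)) = inner ℂ (U x) (U x) := by
      rw [← adjoint_inner_left, hadj x]
    have hz : ‖T (D.ι x) - D.ι (U x)‖ ^ 2 = 0 := by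
      rw [norm_sub_sq (𝕜 := ℂ), hni, hnu, hin, inner_self_eq_norm_sq, hUn]
      ring
    have := (pow_eq_zero_iff (two_ne_zero)).mp hz
    exact sub_eq_zero.mp (norm_eq_zero.mp this)
  -- injectivity of U
  have hUinj : ∀ v : X, U v = 0 → v = 0 := fun v hv => aux_inj U hU.2 hv
  -- apply the dilation relation at n = 2
  obtain ⟨x0, hx0⟩ := exists_ne (0 : X)
  have hd2 := D.dil ζ 2 (by norm_num)
  have h2 := ContinuousLinearMap.ext_iff.mp hd2 x0
  have hL : (S ^ 2) x0 = (ρ : ℂ) • (ρ : ℂ) • U (U x0) := by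
    rw [sq, ContinuousLinearMap.mul_apply, hSU]
    simp only [ContinuousLinearMap.smul_apply, map_smul]
  have hR : ((ρ : ℂ) • (adjoint D.ι ∘L ((T ^ 2) ∘L D.ι))) x0
      = (ρ : ℂ) • U (U x0) := by
    simp only [ContinuousLinearMap.smul_apply, ContinuousLinearMap.comp_apply, sq,
      ContinuousLinearMap.mul_apply]
    rw [key x0, key (U x0), hιadj]
  rw [hL, hR] at h2
  have hw : U (U x0) ≠ 0 := fun h => hx0 (hUinj _ (hUinj _ h))
  have h3 : (ρ : ℂ) • ((ρ : ℂ) • U (U x0) - U (U x0)) = 0 := by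
    rw [smul_sub, h2, sub_self]
  have h4 : (ρ : ℂ) • U (U x0) - U (U x0) = 0 := by
    rcases smul_eq_zero.mp h3 with h | h
    · exact absurd h hρ0
    · exact h
  have h5 : ((ρ : ℂ) - 1) • U (U x0) = 0 := by
    rw [sub_smul, one_smul]
    exact h4
  rcases smul_eq_zero.mp h5 with h | h
  · have : (ρ : ℂ) = 1 := by linear_combination h
    exact hρ1 (by exact_mod_cast this)
  · exact hw h
end
end

section
/- Let N ≥ 1, let 0 < ρ < 2, and let A = (A₁,…,A_N) be an N-tuple of bounded linear operators on a complex Hilbert space X. Then ρ·w_{ρ,N}(A) = (2−ρ)·w_{2−ρ,N}(A). -/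
open ContinuousLinearMap

noncomputable section

open Pointwise

set_option maxHeartbeats 1000000

/-- The set of positive scalings `u` with `(1/u)·A ∈ C_{ρ,N}`. -/
def wSet (N : ℕ) (ρ : ℝ) {X : Type*} [NormedAddCommGroup X] [InnerProductSpace ℂ X]
    [CompleteSpace X] (A : Fin N → X →L[ℂ] X) : Set ℝ :=
  {u : ℝ | 0 < u ∧ MemC N ρ (fun k => ((u : ℂ))⁻¹ • A k)}

/-- The operator radius `w_{ρ,N}(A) = inf { u > 0 : (1/u)·A ∈ C_{ρ,N} }`. -/
def wRad (N : ℕ) (ρ : ℝ) {X : Type*} [NormedAddCommGroup X] [InnerProductSpace ℂ X]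
    [CompleteSpace X] (A : Fin N → X →L[ℂ] X) : ℝ :=
  sInf (wSet N ρ A)

section Aux

variable {X : Type*} [NormedAddCommGroup X] [InnerProductSpace ℂ X] [CompleteSpace X]
variable {Y : Type*} [NormedAddCommGroup Y] [InnerProductSpace ℂ Y] [CompleteSpace Y]

lemma adjoint_comp_self_of_isometry (ι : X →L[ℂ] Y) (h : Isometry ι) :
    adjoint ι ∘L ι = 1 := by
  have hnorm : ∀ x, ‖ι x‖ = ‖x‖ := fun x => h.norm_map_of_map_zero (map_zero ι) x
  have hinner : ∀ x y : X, (inner ℂ (ι x) (ι y) : ℂ) = inner ℂ x y :=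
    (LinearMap.norm_map_iff_inner_map_map ι).mp hnorm
  ext x
  refine ext_inner_left ℂ fun y => ?_
  rw [ContinuousLinearMap.comp_apply, adjoint_inner_right, hinner, ContinuousLinearMap.one_apply]

lemma key_dilation (ι : X →L[ℂ] Y) (hι : adjoint ι ∘L ι = 1)
    (U : Y →L[ℂ] Y) (T : X →L[ℂ] X) (ρ ρ' : ℝ)
    (hρ : (ρ : ℂ) ≠ 0) (hρ' : (ρ' : ℂ) ≠ 0) (hsum : ρ + ρ' = 2)
    (hdil : ∀ n : ℕ, 1 ≤ n → T ^ n = (ρ : ℂ) • (adjoint ι ∘L ((U ^ n) ∘L ι)))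
    (n : ℕ) (hn : 1 ≤ n) :
    ((ρ' / ρ : ℂ) • T) ^ n =
      (ρ' : ℂ) •
        (adjoint ι ∘L
          (((-(U ∘L ((1 : Y →L[ℂ] Y) - (2 : ℂ) • (ι ∘L adjoint ι)))) ^ n) ∘L ι)) := by
  set Q : Y →L[ℂ] Y := (1 : Y →L[ℂ] Y) - (2 : ℂ) • (ι ∘L adjoint ι) with hQ
  set W : Y →L[ℂ] Y := U ∘L Q with hW
  set q : ℂ := -((ρ' : ℂ) / (ρ : ℂ)) with hq
  set c : ℕ → ℂ := fun m => if m = 0 then 1 else q ^ m / ρ' with hc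
  have hc0 : c 0 = 1 := by simp [hc]
  have hcm : ∀ m : ℕ, m ≠ 0 → c m = q ^ m / ρ' := by
    intro m hm; simp only [hc]; rw [if_neg hm]
  have hadj : ∀ x : X, adjoint ι (ι x) = x := by
    intro x
    have := congrArg (fun (f : X →L[ℂ] X) => f x) hι
    simpa using this
  have hdil' : ∀ k : ℕ, 1 ≤ k → ∀ x : X, adjoint ι ((U ^ k) (ι x)) = (ρ : ℂ)⁻¹ • (T ^ k) x := by
    intro k hk x
    have h1 : (T ^ k) x = (ρ : ℂ) • adjoint ι ((U ^ k) (ι x)) := by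
      have := congrArg (fun (f : X →L[ℂ] X) => f x) (hdil k hk)
      simpa using this
    rw [h1, inv_smul_smul₀ hρ]
  have hρsub : (ρ : ℂ) - 2 = -(ρ' : ℂ) := by
    have h : ρ - 2 = -ρ' := by linarith
    calc (ρ : ℂ) - 2 = ((ρ - 2 : ℝ) : ℂ) := by push_cast; ring
    _ = -(ρ' : ℂ) := by rw [h]; push_cast; ring
  have hρq : (ρ : ℂ) * q = -(ρ' : ℂ) := by rw [hq]; field_simp
  have hscal : ∀ m : ℕ, 1 ≤ m → (1 : ℂ) - 2 * (∑ j ∈ Finset.range m, c j) = ρ * c m := by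
    intro m hm
    induction m with
    | zero => omega
    | succ k ih =>
      rcases Nat.lt_or_ge k 1 with h1 | hk1
      · have hk0 : k = 0 := by omega
        subst hk0
        rw [Finset.sum_range_one, hc0, hcm 1 one_ne_zero, pow_one]
        rw [mul_div_assoc'] at *
        rw [eq_div_iff hρ']
        linear_combination -hρq
      · have ihk := ih hk1
        have hck1 : c (k + 1) = q * c k := by
          rw [hcm _ (by omega), hcm _ (by omega), pow_succ]
          ring
        calc (1 : ℂ) - 2 * (∑ j ∈ Finset.range (k + 1), c j)
            = ((1 : ℂ) - 2 * (∑ j ∈ Finset.range k, c j)) - 2 * c k := by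
              rw [Finset.sum_range_succ]; ring
        _ = ρ * c k - 2 * c k := by rw [ihk]
        _ = ((ρ : ℂ) - 2) * c k := by ring
        _ = ρ * c (k + 1) := by rw [hρsub, hck1, ← hρq]; ring
  -- main joint induction
  have main : ∀ m : ℕ,
      (∀ x : X, (W ^ m) (ι x) =
        (U ^ m) (ι x) - ∑ j ∈ Finset.range m, (2 * c j) • (U ^ (m - j)) (ι ((T ^ j) x))) ∧
      (∀ x : X, adjoint ι ((W ^ m) (ι x)) = c m • (T ^ m) x) := by
    intro m
    induction m with
    | zero =>
      constructor
      · intro x; simp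
      · intro x; simp [hadj x, hc0]
    | succ m ih =>
      obtain ⟨ihA, ihB⟩ := ih
      have hQapp : ∀ y : Y, Q y = y - (2 : ℂ) • ι (adjoint ι y) := by
        intro y
        rw [hQ]
        rw [ContinuousLinearMap.sub_apply, ContinuousLinearMap.smul_apply,
          ContinuousLinearMap.one_apply, ContinuousLinearMap.comp_apply]
      have stepA : ∀ x : X, (W ^ (m + 1)) (ι x) =
          (U ^ (m + 1)) (ι x) -
            ∑ j ∈ Finset.range (m + 1), (2 * c j) • (U ^ (m + 1 - j)) (ι ((T ^ j) x)) := by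
        intro x
        have h1 : (W ^ (m + 1)) (ι x) = W ((W ^ m) (ι x)) := by
          rw [pow_succ' W m, ContinuousLinearMap.mul_apply]
        rw [h1, hW]
        have h2 : (U ∘L Q) ((W ^ m) (ι x)) = U (Q ((W ^ m) (ι x))) := rfl
        rw [h2, hQapp, ihB x, ihA x]
        rw [map_sub, map_sub, map_sum]
        have h3 : U ((U ^ m) (ι x)) = (U ^ (m + 1)) (ι x) := by
          rw [pow_succ' U m, ContinuousLinearMap.mul_apply]
        have h4 : ∀ j ∈ Finset.range m,
            U ((2 * c j) • (U ^ (m - j)) (ι ((T ^ j) x))) =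
              (2 * c j) • (U ^ (m + 1 - j)) (ι ((T ^ j) x)) := by
          intro j hj
          have hj' : j ≤ m := le_of_lt (Finset.mem_range.mp hj)
          rw [map_smul]
          congr 1
          rw [(by omega : m + 1 - j = (m - j) + 1), pow_succ' U, ContinuousLinearMap.mul_apply]
        rw [Finset.sum_congr rfl h4, h3]
        rw [Finset.sum_range_succ, (by omega : m + 1 - m = 1), pow_one]
        have h5 : U ((2 : ℂ) • ι (c m • (T ^ m) x)) = (2 * c m) • U (ι ((T ^ m) x)) := by
          simp only [map_smul, smul_smul]
        rw [h5]
        abel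
      refine ⟨stepA, ?_⟩
      intro x
      rw [stepA x, map_sub, map_sum]
      have h6 : ∀ j ∈ Finset.range (m + 1),
          adjoint ι ((2 * c j) • (U ^ (m + 1 - j)) (ι ((T ^ j) x))) =
            (2 * c j) • ((ρ : ℂ)⁻¹ • (T ^ (m + 1)) x) := by
        intro j hj
        have hj' : j ≤ m := by have := Finset.mem_range.mp hj; omega
        rw [map_smul, hdil' (m + 1 - j) (by omega) ((T ^ j) x)]
        congr 2
        have h7 : (T ^ (m + 1 - j)) ((T ^ j) x) = ((T ^ (m + 1 - j)) * (T ^ j)) x := rfl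
        rw [h7, ← pow_add]
        congr 2
        omega
      rw [Finset.sum_congr rfl h6, hdil' (m + 1) (by omega) x]
      rw [← Finset.sum_smul, Finset.sum_congr rfl (fun j _ => rfl), ← Finset.mul_sum,
        smul_smul, ← sub_smul]
      congr 1
      have h10 := hscal (m + 1) (by omega)
      rw [hcm (m + 1) (by omega)] at h10 ⊢
      field_simp at h10 ⊢
      linear_combination h10
  -- conclude
  obtain ⟨-, hB⟩ := main n
  ext x
  have hneg : -W = (-1 : ℂ) • W := (neg_one_smul ℂ W).symm
  rw [ContinuousLinearMap.smul_apply, ContinuousLinearMap.comp_apply,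
    ContinuousLinearMap.comp_apply]
  rw [hneg, smul_pow (-1 : ℂ) W n, ContinuousLinearMap.smul_apply, map_smul, hB x,
    smul_pow ((ρ' : ℂ) / ρ) T n, ContinuousLinearMap.smul_apply, smul_smul, smul_smul]
  congr 1
  have h11 : ((-1 : ℂ)) ^ n * ((-1 : ℂ)) ^ n = 1 := by
    rw [← mul_pow]; norm_num
  rw [hcm n (by omega), hq, neg_pow (((ρ' : ℂ) / ρ)) n]
  have h12 : (ρ' : ℂ) * (ρ' : ℂ)⁻¹ = 1 := mul_inv_cancel₀ hρ'
  rw [div_eq_mul_inv ((-1 : ℂ) ^ n * ((ρ' : ℂ) / ρ) ^ n)]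
  linear_combination (-(((ρ' : ℂ) / ρ) ^ n) * (ρ' : ℂ) * (ρ' : ℂ)⁻¹) * h11 +
    (-(((ρ' : ℂ) / ρ) ^ n)) * h12

lemma memC_step (N : ℕ) (ρ ρ' : ℝ) (hρ0 : 0 < ρ) (hρ'0 : 0 < ρ') (hsum : ρ + ρ' = 2)
    (A : Fin N → X →L[ℂ] X) (u : ℝ) (hu : 0 < u)
    (h : MemC N ρ (fun k => ((u : ℂ))⁻¹ • A k)) :
    MemC N ρ' (fun k => (((u * ρ / ρ' : ℝ) : ℂ))⁻¹ • A k) := by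
  obtain ⟨d⟩ := h
  letI := d.instN; letI := d.instI; letI := d.instC
  have hρ : (ρ : ℂ) ≠ 0 := by exact_mod_cast ne_of_gt hρ0
  have hρ' : (ρ' : ℂ) ≠ 0 := by exact_mod_cast ne_of_gt hρ'0
  have hι : adjoint d.ι ∘L d.ι = 1 := adjoint_comp_self_of_isometry d.ι d.isom
  set Q : d.Y →L[ℂ] d.Y := (1 : d.Y →L[ℂ] d.Y) - (2 : ℂ) • (d.ι ∘L adjoint d.ι) with hQdef
  have hadjpt : ∀ x : X, adjoint d.ι (d.ι x) = x := by
    intro x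
    have := congrArg (fun (f : X →L[ℂ] X) => f x) hι
    simpa using this
  have hQpt : ∀ y, Q y = y - (2 : ℂ) • d.ι (adjoint d.ι y) := by
    intro y
    rfl
  have hQQ : Q ∘L Q = 1 := by
    ext y
    rw [ContinuousLinearMap.comp_apply, ContinuousLinearMap.one_apply, hQpt, hQpt,
      map_sub, map_smul, hadjpt, map_sub, map_smul]
    module
  have hQadj : adjoint Q = Q := by
    rw [hQdef, map_sub, map_smulₛₗ, ContinuousLinearMap.adjoint_comp,
      ContinuousLinearMap.adjoint_adjoint]
    have hone : adjoint (1 : d.Y →L[ℂ] d.Y) = 1 := by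
      rw [ContinuousLinearMap.one_def, adjoint_id]
    have hconj : (starRingEnd ℂ) (2 : ℂ) = 2 := by
      rw [Complex.conj_eq_iff_im]
      simp
    rw [hone, hconj]
  have hsumAt : ∀ w : Fin N → ℂ,
      (∑ k, w k • (-(d.At k ∘L Q))) = -((∑ k, w k • d.At k) ∘L Q) := by
    intro w
    calc ∑ k, w k • (-(d.At k ∘L Q)) = ∑ k, -((w k • d.At k) ∘L Q) := by
          refine Finset.sum_congr rfl fun k _ => ?_
          rw [ContinuousLinearMap.smul_comp, smul_neg]
    _ = -((∑ k, w k • d.At k) ∘L Q) := by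
          rw [Finset.sum_neg_distrib, ContinuousLinearMap.finset_sum_comp]
  have hunit : ∀ ζ : Fin N → ℂ, (∀ k, ‖ζ k‖ = 1) →
      IsUnitaryOp (∑ k, ζ k • (-(d.At k ∘L Q))) := by
    intro ζ hζ
    obtain ⟨hV1, hV2⟩ := d.unit ζ hζ
    set V := ∑ k, ζ k • d.At k with hVdef
    rw [hsumAt ζ]
    have hQQm : Q * Q = 1 := hQQ
    have hV1m : V * adjoint V = 1 := hV1
    have hV2m : adjoint V * V = 1 := hV2
    have hadjneg : adjoint (-(V ∘L Q)) = -(Q ∘L adjoint V) := by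
      rw [map_neg, ContinuousLinearMap.adjoint_comp, hQadj]
    constructor
    · rw [hadjneg, ContinuousLinearMap.comp_neg, ContinuousLinearMap.neg_comp, neg_neg]
      show (V * Q) * (Q * adjoint V) = 1
      rw [mul_assoc, ← mul_assoc Q Q, hQQm, one_mul, hV1m]
    · rw [hadjneg, ContinuousLinearMap.comp_neg, ContinuousLinearMap.neg_comp, neg_neg]
      show (Q * adjoint V) * (V * Q) = 1
      rw [mul_assoc, ← mul_assoc (adjoint V) V, hV2m, one_mul, hQQm]
  have hdil2 : ∀ (z : Fin N → ℂ) (n : ℕ), 1 ≤ n →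
      (∑ k, z k • ((((u * ρ / ρ' : ℝ)) : ℂ)⁻¹ • A k)) ^ n =
        (ρ' : ℂ) •
          (adjoint d.ι ∘L (((∑ k, z k • (-(d.At k ∘L Q))) ^ n) ∘L d.ι)) := by
    intro z n hn
    have hu' : ((u : ℝ) : ℂ) ≠ 0 := by exact_mod_cast ne_of_gt hu
    have hsc : (((u * ρ / ρ' : ℝ)) : ℂ)⁻¹ = (ρ' / ρ : ℂ) * ((u : ℝ) : ℂ)⁻¹ := by
      push_cast
      rw [div_eq_mul_inv, div_eq_mul_inv, mul_inv, mul_inv, inv_inv]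
      ring
    have hT : (∑ k, z k • ((((u * ρ / ρ' : ℝ)) : ℂ)⁻¹ • A k)) =
        (ρ' / ρ : ℂ) • (∑ k, z k • (((u : ℝ) : ℂ)⁻¹ • A k)) := by
      rw [Finset.smul_sum]
      refine Finset.sum_congr rfl fun k _ => ?_
      rw [hsc, smul_smul, smul_smul, smul_smul]
      congr 1
      ring
    rw [hT, hsumAt z, hQdef]
    exact key_dilation d.ι hι (∑ k, z k • d.At k) (∑ k, z k • (((u : ℝ) : ℂ)⁻¹ • A k))
      ρ ρ' hρ hρ' hsum (d.dil z) n hn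
  exact ⟨⟨d.Y, d.ι, d.isom, fun k => -(d.At k ∘L Q), hunit, hdil2⟩⟩

end Aux

/-- for `0 < ρ < 2` one has `ρ·w_{ρ,N}(A) = (2−ρ)·w_{2−ρ,N}(A)`. -/
theorem wRad_symmetry (N : ℕ) (hN : 1 ≤ N) (ρ : ℝ) (hρ0 : 0 < ρ) (hρ2 : ρ < 2)
    {X : Type*} [NormedAddCommGroup X] [InnerProductSpace ℂ X] [CompleteSpace X]
    (A : Fin N → X →L[ℂ] X) :
    ρ * wRad N ρ A = (2 - ρ) * wRad N (2 - ρ) A := by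
  have hρ'0 : 0 < 2 - ρ := by linarith
  have hsum : ρ + (2 - ρ) = 2 := by ring
  have hsum' : (2 - ρ) + ρ = 2 := by ring
  have hstep : ∀ σ σ' : ℝ, 0 < σ → 0 < σ' → σ + σ' = 2 →
      ∀ u, u ∈ wSet N σ A → u * σ / σ' ∈ wSet N σ' A := by
    intro σ σ' hσ hσ' hss u hu
    exact ⟨by have h := hu.1; positivity, memC_step N σ σ' hσ hσ' hss A u hu.1 hu.2⟩
  have hsets : wSet N (2 - ρ) A = (fun u => (ρ / (2 - ρ)) * u) '' wSet N ρ A := by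
    ext v
    constructor
    · intro hv
      refine ⟨v * (2 - ρ) / ρ, hstep (2 - ρ) ρ hρ'0 hρ0 hsum' v hv, ?_⟩
      field_simp
    · rintro ⟨w, hw, rfl⟩
      have h2 := hstep ρ (2 - ρ) hρ0 hρ'0 hsum w hw
      have heq : (ρ / (2 - ρ)) * w = w * ρ / (2 - ρ) := by ring
      show (ρ / (2 - ρ)) * w ∈ wSet N (2 - ρ) A
      rw [heq]
      exact h2
  have himg : ((fun u => (ρ / (2 - ρ)) * u) '' wSet N ρ A) = (ρ / (2 - ρ)) • wSet N ρ A := by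
    ext v
    simp [Set.mem_smul_set, smul_eq_mul]
  rw [wRad, wRad, hsets, himg, Real.sInf_smul_of_nonneg (by positivity), smul_eq_mul]
  have hne : (2 : ℝ) - ρ ≠ 0 := ne_of_gt hρ'0
  field_simp
end
end
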